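/- Let n, d be positive natural numbers and let E_1, …, E_d ∈ Matrix (Fin n) (Fin n) ℂ satisfy ∑_{i=1}^d E_i† E_i = 1_n. Then there exists a unitary matrix U ∈ Matrix (Fin n × Fin d) (Fin n × Fin d) ℂ such that for every ρ ∈ Matrix (Fin n) (Fin n) ℂ, ∑_{i=1}^d E_i ρ E_i† = Tr₂[U (ρ ⊗ e₀e₀†) U†], where e₀e₀† ∈ Matrix (Fin d) (Fin d) ℂ is the standard matrix unit E_{00} (the projector onto the first basis vector of ℂ^d), ⊗ is the Kronecker product, and Tr₂ is the partial trace over the second Kronecker factor: (Tr₂ X)_{p,q} = ∑_{k} X_{(p,k),(q,k)}. -/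

import Mathlib

open Matrix Kronecker
open scoped ComplexConjugate InnerProductSpace

noncomputable section

namespace StinespringAux

variable {a b : Type*} [Fintype a] [Fintype b] [DecidableEq b]

lemma inner_toEuclideanLin (M : Matrix a b ℂ) (hM : Mᴴ * M = 1)
    (x y : EuclideanSpace ℂ b) :
    ⟪Matrix.toEuclideanLin M x, Matrix.toEuclideanLin M y⟫_ℂ = ⟪x, y⟫_ℂ := by
  rw [EuclideanSpace.inner_eq_star_dotProduct, EuclideanSpace.inner_eq_star_dotProduct,
    Matrix.ofLp_toEuclideanLin_apply, Matrix.ofLp_toEuclideanLin_apply,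
    Matrix.star_mulVec, dotProduct_comm, Matrix.dotProduct_mulVec, Matrix.vecMul_vecMul, hM,
    Matrix.vecMul_one, dotProduct_comm]

/-- The isometry given by a matrix with orthonormal columns. -/
def isoOf (M : Matrix a b ℂ) (hM : Mᴴ * M = 1) :
    EuclideanSpace ℂ b →ₗᵢ[ℂ] EuclideanSpace ℂ a :=
  (Matrix.toEuclideanLin M).isometryOfInner (inner_toEuclideanLin M hM)

lemma isoOf_apply (M : Matrix a b ℂ) (hM : Mᴴ * M = 1) (v : EuclideanSpace ℂ b) :
    isoOf M hM v = (WithLp.equiv 2 (a → ℂ)).symm (M *ᵥ (WithLp.equiv 2 (b → ℂ)) v) := by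
  simp [isoOf, Matrix.toEuclideanLin_apply]

end StinespringAux

end


open StinespringAux

/-- Stinespring dilation for trace-preserving operations: a quantum channel given
by Kraus operators `E i` with `∑ i, E iᴴ * E i = 1` can be realized as
`ρ ↦ Tr₂[U (ρ ⊗ |0⟩⟨0|) Uᴴ]` for some unitary `U` on the system-plus-environment
space. -/
theorem stinespring_dilation (n d : ℕ) (hn : 0 < n) (hd : 0 < d)
    (E : Fin d → Matrix (Fin n) (Fin n) ℂ)
    (hE : ∑ i, (E i)ᴴ * E i = 1) :
    ∃ U : Matrix (Fin n × Fin d) (Fin n × Fin d) ℂ,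
      U * Uᴴ = 1 ∧ Uᴴ * U = 1 ∧
      ∀ ρ : Matrix (Fin n) (Fin n) ℂ,
        (∑ i, E i * ρ * (E i)ᴴ)
          = Matrix.of (fun p q : Fin n => ∑ k : Fin d,
              (U * (ρ ⊗ₖ Matrix.single (⟨0, hd⟩ : Fin d) (⟨0, hd⟩ : Fin d) (1 : ℂ)) * Uᴴ)
                (p, k) (q, k)) := by

  classical
  set z0 : Fin d := ⟨0, hd⟩ with hz0
  -- the isometry sending e_q to the column (E i p q)
  set V : Matrix (Fin n × Fin d) (Fin n) ℂ := fun x q => E x.2 x.1 q with hVdef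
  have hV : Vᴴ * V = 1 := by
    ext a c
    have h1 : (∑ i, (E i)ᴴ * E i) a c = (1 : Matrix (Fin n) (Fin n) ℂ) a c := by rw [hE]
    rw [← h1]
    simp only [Matrix.mul_apply, Matrix.conjTranspose_apply, Matrix.sum_apply]
    simp only [hVdef, Fintype.sum_prod_type]
    rw [Finset.sum_comm]
  -- the isometry embedding ℂ^n as the "environment state 0" block
  set P : Matrix (Fin n × Fin d) (Fin n) ℂ := fun x q => if x = (q, z0) then 1 else 0 with hPdef
  have hP : Pᴴ * P = 1 := by
    ext a c
    simp only [Matrix.mul_apply, Matrix.conjTranspose_apply, Matrix.one_apply]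
    simp only [hPdef,
      apply_ite (star : ℂ → ℂ), star_one, star_zero, ite_mul, one_mul, zero_mul]
    rw [Finset.sum_ite_eq' Finset.univ ((a, z0) : Fin n × Fin d)
      (fun x => if x = (c, z0) then (1:ℂ) else 0)]
    simp [Prod.ext_iff]
  set W := isoOf V hV with hW
  set φ := isoOf P hP with hφ
  set S := LinearMap.range φ.toLinearMap with hS
  set L : S →ₗᵢ[ℂ] EuclideanSpace ℂ (Fin n × Fin d) :=
    W.comp φ.equivRange.symm.toLinearIsometry with hL
  set f := L.extend with hf
  have hfφ : ∀ v : EuclideanSpace ℂ (Fin n), f (φ v) = W v := by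
    intro v
    have hmem : φ v ∈ S := ⟨v, rfl⟩
    have h1 : f (φ v) = L ⟨φ v, hmem⟩ := L.extend_apply ⟨φ v, hmem⟩
    rw [h1]
    have h2 : φ.equivRange v = ⟨φ v, hmem⟩ := by
      apply Subtype.ext; simp
    simp [hL, LinearIsometry.comp_apply, ← h2]
  -- the unitary matrix
  set U : Matrix (Fin n × Fin d) (Fin n × Fin d) ℂ :=
    fun x y => (WithLp.equiv 2 _ (f (EuclideanSpace.single y 1))) x with hUdef
  have hcol : ∀ (p : Fin n) (i : Fin d) (q : Fin n), U (p, i) (q, z0) = E i p q := by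
    intro p i q
    have hsingle : (EuclideanSpace.single ((q, z0) : Fin n × Fin d) (1:ℂ))
        = φ (EuclideanSpace.single q 1) := by
      rw [hφ, isoOf_apply, WithLp.equiv_apply, EuclideanSpace.ofLp_single]
      rw [Matrix.mulVec_single]
      show _ = (WithLp.equiv 2 (Fin n × Fin d → ℂ)).symm (fun i : Fin n × Fin d => P i q * 1)
      have : (fun i : Fin n × Fin d => P i q * 1) = Pi.single ((q, z0) : Fin n × Fin d) (1:ℂ) := by
        funext x
        simp [hPdef, Pi.single_apply]
      rw [this, WithLp.equiv_symm_apply, EuclideanSpace.toLp_single]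
    rw [hUdef]
    show (WithLp.equiv 2 _ (f (EuclideanSpace.single ((q,z0) : Fin n × Fin d) 1))) (p, i) = E i p q
    rw [hsingle, hfφ, hW, isoOf_apply]
    simp [hVdef, Matrix.mulVec, dotProduct, Pi.single_apply, EuclideanSpace.ofLp_single]
  have hU1 : Uᴴ * U = 1 := by
    ext x y
    have h1 : ⟪f (EuclideanSpace.single x 1), f (EuclideanSpace.single y 1)⟫_ℂ
        = ⟪(EuclideanSpace.single x (1:ℂ) : EuclideanSpace ℂ (Fin n × Fin d)),
            EuclideanSpace.single y 1⟫_ℂ := f.inner_map_map _ _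
    have h2 : ⟪(EuclideanSpace.single x (1:ℂ) : EuclideanSpace ℂ (Fin n × Fin d)),
        EuclideanSpace.single y 1⟫_ℂ = if x = y then 1 else 0 := by
      rw [EuclideanSpace.inner_single_left]
      simp [EuclideanSpace.single_apply, eq_comm]
    rw [EuclideanSpace.inner_eq_star_dotProduct] at h1
    simp only [Matrix.mul_apply, Matrix.conjTranspose_apply, Matrix.one_apply]
    simp only [hUdef]
    rw [← h2, ← h1]
    rw [dotProduct_comm]; rfl
  have hUU : U * Uᴴ = 1 := mul_eq_one_comm.mpr hU1
  refine ⟨U, hUU, hU1, ?_⟩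
  intro ρ
  ext p q
  show (∑ i, E i * ρ * (E i)ᴴ) p q = ∑ k : Fin d,
      (U * (ρ ⊗ₖ Matrix.single z0 z0 (1 : ℂ)) * Uᴴ) (p, k) (q, k)
  have key : ∀ k : Fin d,
      (U * (ρ ⊗ₖ Matrix.single z0 z0 (1 : ℂ)) * Uᴴ) (p, k) (q, k)
        = ∑ a : Fin n, ∑ b : Fin n, E k p a * ρ a b * star (E k q b) := by
    intro k
    simp only [Matrix.mul_apply, Matrix.conjTranspose_apply, Fintype.sum_prod_type,
      Matrix.kroneckerMap_apply, Matrix.single, Matrix.of_apply]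
    simp only [mul_ite, mul_one, mul_zero, ite_and, Finset.sum_ite_eq, Finset.mem_univ,
      if_true, ite_mul, zero_mul, Finset.sum_ite_irrel, Finset.sum_const_zero]
    simp only [hcol, Finset.sum_mul]
    exact Finset.sum_comm
  rw [Finset.sum_congr rfl fun k _ => key k]
  simp only [Matrix.sum_apply, Matrix.mul_apply, Matrix.conjTranspose_apply,
    Finset.sum_mul, Finset.mul_sum]
  exact Finset.sum_congr rfl fun k _ => Finset.sum_comm
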